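/- Let p_1 < p_2 < ... < p_r be primes with p_1 ≥ (r+2)/2. Then 3·φ(p_1·p_2⋯p_r) ≥ p_1·p_2⋯p_r, with equality if and only if r = 2, p_1 = 2 and p_2 = 3. -/

import Mathlib

open Finset

lemma tele (a : ℕ) : ∀ r : ℕ, (a+1) * ∏ i ∈ range r, (a+2+i) = (a+r+1) * ∏ i ∈ range r, (a+1+i) := by
  intro r
  induction r with
  | zero => simp
  | succ n ih =>
    rw [prod_range_succ, prod_range_succ, ← mul_assoc, ih]
    ring

lemma tot_prod (p : ℕ → ℕ) : ∀ r : ℕ, (∀ i < r, (p i).Prime) →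
    (∀ i j, i < j → j < r → p i ≠ p j) →
    Nat.totient (∏ i ∈ range r, p i) = ∏ i ∈ range r, (p i - 1) := by
  intro r
  induction r with
  | zero => simp
  | succ n ih =>
    intro hp hne
    rw [prod_range_succ, prod_range_succ, Nat.totient_mul, ih (fun i hi => hp i (by omega))
        (fun i j h1 h2 => hne i j h1 (by omega)), Nat.totient_prime (hp n (by omega))]
    · exact Nat.Coprime.prod_left fun i hi =>
        (Nat.coprime_primes (hp i (by have := Finset.mem_range.mp hi; omega)) (hp n (by omega))).mpr
          (hne i n (Finset.mem_range.mp hi) (by omega))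

theorem stmt_2 (r : ℕ) (hr : 1 ≤ r) (p : ℕ → ℕ)
    (hp : ∀ i < r, (p i).Prime)
    (hmono : ∀ i j, i < j → j < r → p i < p j)
    (hge : r + 2 ≤ 2 * p 0) :
    3 * Nat.totient (∏ i ∈ Finset.range r, p i) ≥ ∏ i ∈ Finset.range r, p i ∧
    (3 * Nat.totient (∏ i ∈ Finset.range r, p i) = ∏ i ∈ Finset.range r, p i ↔
      r = 2 ∧ p 0 = 2 ∧ p 1 = 3) := by
  have htot : Nat.totient (∏ i ∈ range r, p i) = ∏ i ∈ range r, (p i - 1) :=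
    tot_prod p r hp (fun i j h1 h2 => Nat.ne_of_lt (hmono i j h1 h2))
  obtain ⟨a, ha⟩ : ∃ a, p 0 = a + 2 := ⟨p 0 - 2, by have := (hp 0 hr).two_le; omega⟩
  have hlow : ∀ i, i < r → a + 2 + i ≤ p i := by
    intro i
    induction i with
    | zero => intro _; omega
    | succ n ihn =>
      intro hn
      have h1 := ihn (by omega)
      have h2 := hmono n (n+1) (by omega) hn
      omega
  -- termwise inequality
  have key : (∏ i ∈ range r, p i) * ∏ i ∈ range r, (a+1+i) ≤
      (∏ i ∈ range r, (a+2+i)) * ∏ i ∈ range r, (p i - 1) := by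
    rw [← prod_mul_distrib, ← prod_mul_distrib]
    apply Finset.prod_le_prod'
    intro i hi
    have hi' := Finset.mem_range.mp hi
    have h1 := hlow i hi'
    obtain ⟨q, hq⟩ : ∃ q, p i = q + 1 := ⟨p i - 1, by omega⟩
    rw [hq]
    simp only [Nat.add_sub_cancel]
    nlinarith [h1]
  set A := ∏ i ∈ range r, p i with hA
  set B := ∏ i ∈ range r, (p i - 1) with hB
  set P := ∏ i ∈ range r, (a+1+i) with hP
  set Q := ∏ i ∈ range r, (a+2+i) with hQ
  have k2 : (a+1) * Q = (a+r+1) * P := tele a r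
  have k3 : a + r + 1 ≤ 3*(a+1) := by omega
  have Ppos : 0 < P := Finset.prod_pos fun i _ => by omega
  have c1 : ((a+1)*P) * A ≤ ((a+1)*P) * (3*B) := by
    calc ((a+1)*P)*A = (a+1)*(A*P) := by ring
    _ ≤ (a+1)*(Q*B) := Nat.mul_le_mul_left _ key
    _ = ((a+1)*Q)*B := by ring
    _ = ((a+r+1)*P)*B := by rw [k2]
    _ ≤ (3*(a+1)*P)*B := Nat.mul_le_mul_right _ (Nat.mul_le_mul_right _ k3)
    _ = ((a+1)*P)*(3*B) := by ring
  have hineq : A ≤ 3*B := Nat.le_of_mul_le_mul_left c1 (by positivity)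
  refine ⟨by rw [htot]; exact hineq, ?_, ?_⟩
  · intro h
    rw [htot] at h
    have hp0 : p 0 = 2 := by
      by_contra h0
      have hodd : Odd (p 0) := (hp 0 hr).odd_of_ne_two h0
      have hd1 : 2 ∣ p 0 - 1 := by obtain ⟨k, hk⟩ := hodd; omega
      have hd2 : (p 0 - 1) ∣ B := Finset.dvd_prod_of_mem _ (Finset.mem_range.mpr hr)
      have hd3 : (2 : ℕ) ∣ A := by
        rw [← h]; exact Dvd.dvd.mul_left (hd1.trans hd2) 3
      obtain ⟨i, hi, hdi⟩ := (Nat.prime_two).prime.exists_mem_finset_dvd hd3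
      have hi' := Finset.mem_range.mp hi
      have hpi2 : p i = 2 :=
        ((Nat.prime_dvd_prime_iff_eq Nat.prime_two (hp i hi')).mp hdi).symm
      rcases Nat.eq_zero_or_pos i with h0' | h0'
      · exact h0 (h0' ▸ hpi2)
      · have := hmono 0 i h0' hi'
        omega
    have hr2 : r ≤ 2 := by omega
    interval_cases r
    · rw [hA, hB] at h
      simp [prod_range_one, hp0] at h
    · have h12 : p 1 > 2 := hp0 ▸ hmono 0 1 (by omega) (by omega)
      rw [hA, hB] at h
      simp only [prod_range_succ, prod_range_zero, one_mul, hp0] at h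
      exact ⟨rfl, hp0, by omega⟩
  · rintro ⟨rfl, h0, h1⟩
    rw [htot, hA, hB]
    norm_num [prod_range_succ, h0, h1]
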